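/- Let G be a graph on n vertices and q = e(G)/C(n,2) its edge density. Suppose there is a subset S ⊆ V(G) with |e(S) − q·C(|S|,2)| ≥ D. Then for n sufficiently large there exists a subset S' of exactly ⌊n/2⌋ vertices with |e(S') − q·C(|S'|,2)| ≥ D/8. -/
import Mathlib

open Finset

/-- The number of edges of `G` inside the vertex subset `S`. -/
noncomputable def interiorEdges {V : Type*} (G : SimpleGraph V) (S : Finset V) : ℕ :=
  Nat.card {e : Sym2 V // e ∈ G.edgeSet ∧ ∀ v ∈ e, v ∈ S}

section Aux

variable {V : Type} [Fintype V] [DecidableEq V] (G : SimpleGraph V) [DecidableRel G.Adj]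

/-- Edges of `G` inside `S`, as a `Finset`. -/
def edgesIn (S : Finset V) : Finset (Sym2 V) :=
  G.edgeFinset.filter (fun e => ∀ v ∈ e, v ∈ S)

lemma interiorEdges_eq (S : Finset V) : interiorEdges G S = (edgesIn G S).card := by
  rw [interiorEdges, Nat.card_eq_fintype_card, edgesIn, Fintype.card_subtype]
  congr 1
  ext e
  simp [SimpleGraph.mem_edgeFinset]

/-- coefficient: number of `k`-subsets of a `t`-set containing a fixed `a`-subset. -/
def cc (t k a : ℕ) : ℕ := if a ≤ k then (t - a).choose (k - a) else 0

lemma two_mul_choose_two (r : ℕ) : 2 * r.choose 2 = r * (r - 1) := by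
  rw [Nat.choose_two_right, Nat.two_mul_div_two_of_even (Nat.even_mul_pred_self r)]

lemma choose_two_real (x : ℕ) : 2 * ((x.choose 2 : ℕ) : ℝ) = (x : ℝ) * x - x := by
  rcases Nat.eq_zero_or_pos x with rfl | hx
  · simp
  · have h := two_mul_choose_two x
    have h2 : ((2 * x.choose 2 : ℕ) : ℝ) = ((x * (x - 1) : ℕ) : ℝ) := by rw [h]
    rw [Nat.cast_mul, Nat.cast_mul, Nat.cast_sub hx] at h2
    push_cast at h2 ⊢
    linarith

lemma choose_id1 {t k : ℕ} (h1 : 1 ≤ k) (hk : k ≤ t) :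
    t * (t - 1).choose (k - 1) = k * t.choose k := by
  obtain ⟨t', rfl⟩ : ∃ t', t = t' + 1 := ⟨t - 1, by omega⟩
  obtain ⟨k', rfl⟩ : ∃ k', k = k' + 1 := ⟨k - 1, by omega⟩
  simpa [Nat.succ_sub_one, Nat.mul_comm] using Nat.add_one_mul_choose_eq t' k'

lemma choose_id2 {t k : ℕ} (h1 : 1 ≤ k) (hk : k ≤ t) :
    (t * (t - 1)) * cc t k 2 = (k * (k - 1)) * t.choose k := by
  rcases Nat.lt_or_ge k 2 with h | h
  · interval_cases k <;> simp [cc]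
  · have ht : 2 ≤ t := le_trans h hk
    rw [cc, if_pos h]
    have e1 : (t - 1) * (t - 2).choose (k - 2) = (k - 1) * (t - 1).choose (k - 1) := by
      have := choose_id1 (t := t - 1) (k := k - 1) (by omega) (by omega)
      simpa [show t - 1 - 1 = t - 2 by omega, show k - 1 - 1 = k - 2 by omega] using this
    have e2 : t * (t - 1).choose (k - 1) = k * t.choose k := choose_id1 (by omega) hk
    calc t * (t - 1) * (t - 2).choose (k - 2) = t * ((t - 1) * (t - 2).choose (k - 2)) := by ring
    _ = t * ((k - 1) * (t - 1).choose (k - 1)) := by rw [e1]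
    _ = (k - 1) * (t * (t - 1).choose (k - 1)) := by ring
    _ = (k - 1) * (k * t.choose k) := by rw [e2]
    _ = k * (k - 1) * t.choose k := by ring

lemma cc_zero {t k : ℕ} : cc t k 0 = t.choose k := by simp [cc]

lemma cc_one_le_cc_zero {t k : ℕ} (h1 : 1 ≤ k) (hk : k ≤ t) : cc t k 1 ≤ cc t k 0 := by
  obtain ⟨t', rfl⟩ : ∃ t', t = t' + 1 := ⟨t - 1, by omega⟩
  obtain ⟨k', rfl⟩ : ∃ k', k = k' + 1 := ⟨k - 1, by omega⟩
  simp only [cc, if_pos h1, if_pos (Nat.zero_le _), Nat.succ_sub_one, Nat.sub_zero]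
  rw [Nat.choose_succ_succ]
  omega

lemma cc_two_le_cc_one {t k : ℕ} (h1 : 1 ≤ k) (hk : k ≤ t) : cc t k 2 ≤ cc t k 1 := by
  rcases Nat.lt_or_ge k 2 with h | h
  · simp [cc, Nat.not_le.mpr h]
  · obtain ⟨t', rfl⟩ : ∃ t', t = t' + 1 := ⟨t - 1, by omega⟩
    obtain ⟨k', rfl⟩ : ∃ k', k = k' + 1 := ⟨k - 1, by omega⟩
    have h2 : 2 ≤ t' + 1 := le_trans h hk
    simp only [cc, if_pos h, if_pos h1, Nat.succ_sub_one]
    rw [show t' + 1 - 2 = t' - 1 by omega, show k' + 1 - 2 = k' - 1 by omega]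
    obtain ⟨t'', rfl⟩ : ∃ t'', t' = t'' + 1 := ⟨t' - 1, by omega⟩
    obtain ⟨k'', rfl⟩ : ∃ k'', k' = k'' + 1 := ⟨k' - 1, by omega⟩
    simp only [Nat.succ_sub_one]
    rw [Nat.choose_succ_succ]
    omega

end Aux

section Count

variable {V : Type} [Fintype V] [DecidableEq V] (G : SimpleGraph V) [DecidableRel G.Adj]

lemma count_supersets (W A : Finset V) (hA : A ⊆ W) (m : ℕ) :
    ((powersetCard m W).filter (fun U => A ⊆ U)).card = cc W.card m A.card := by
  rw [cc]
  split_ifs with h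
  · rw [← card_sdiff_of_subset hA, ← card_powersetCard (m - A.card) (W \ A)]
    apply card_bij' (fun U _ => U \ A) (fun B _ => B ∪ A)
    · intro U hU
      simp only [mem_filter, mem_powersetCard] at hU
      simp only [mem_powersetCard]
      exact ⟨sdiff_subset_sdiff hU.1.1 le_rfl, by rw [card_sdiff_of_subset hU.2, hU.1.2]⟩
    · intro B hB
      simp only [mem_powersetCard] at hB
      have hBW : B ⊆ W := hB.1.trans sdiff_subset
      have hdisj : Disjoint B A := disjoint_of_subset_left hB.1 sdiff_disjoint
      simp only [mem_filter, mem_powersetCard]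
      refine ⟨⟨union_subset hBW hA, ?_⟩, subset_union_right⟩
      rw [card_union_of_disjoint hdisj, hB.2]
      omega
    · intro U hU
      simp only [mem_filter, mem_powersetCard] at hU
      exact sdiff_union_of_subset hU.2
    · intro B hB
      simp only [mem_powersetCard] at hB
      have hdisj : Disjoint B A := disjoint_of_subset_left hB.1 sdiff_disjoint
      exact union_sdiff_cancel_right hdisj
  · rw [card_eq_zero, filter_eq_empty_iff]
    intro U hU hAU
    rw [mem_powersetCard] at hU
    exact h (hU.2 ▸ card_le_card hAU)

lemma edgesIn_mono {X Y : Finset V} (h : X ⊆ Y) : edgesIn G X ⊆ edgesIn G Y := by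
  intro e he
  simp only [edgesIn, mem_filter] at he ⊢
  exact ⟨he.1, fun v hv => h (he.2 v hv)⟩

lemma edgesIn_card_step (S T B : Finset V) (hB : B ⊆ T) :
    edgesIn G (S ∪ B) = (edgesIn G (S ∪ T)).filter (fun e => ∀ v ∈ e, v ∈ S ∪ B) := by
  rw [edgesIn, edgesIn, filter_filter]
  apply filter_congr
  intro e _
  constructor
  · intro h
    refine ⟨fun v hv => ?_, h⟩
    rcases mem_union.mp (h v hv) with h' | h'
    · exact mem_union_left _ h'
    · exact mem_union_right _ (hB h')
  · exact fun h => h.2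

lemma edgesIn_empty : edgesIn G (∅ : Finset V) = ∅ := by
  rw [eq_empty_iff_forall_notMem]
  intro e he
  simp only [edgesIn, mem_filter] at he
  induction e using Sym2.ind with
  | _ u v => exact absurd (he.2 u (by simp)) (notMem_empty u)

lemma edgesIn_univ : edgesIn G (univ : Finset V) = G.edgeFinset := by
  rw [edgesIn]
  exact filter_true_of_mem (fun e _ => fun v _ => mem_univ v)

lemma edge_inner_sum (S T : Finset V) (hST : Disjoint S T) (k : ℕ) (e : Sym2 V)
    (he : e ∈ edgesIn G (S ∪ T)) :
    (∑ B ∈ powersetCard k T, if (∀ v ∈ e, v ∈ S ∪ B) then (1:ℝ) else 0)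
      = (cc T.card k 1 : ℝ)
        + (if e ∈ edgesIn G S then (cc T.card k 0 : ℝ) - cc T.card k 1 else 0)
        + (if e ∈ edgesIn G T then (cc T.card k 2 : ℝ) - cc T.card k 1 else 0) := by
  induction e using Sym2.ind with
  | _ u v =>
    simp only [edgesIn, mem_filter] at he
    have hne : u ≠ v := by
      have h := G.not_isDiag_of_mem_edgeSet (SimpleGraph.mem_edgeFinset.mp he.1)
      simpa [Sym2.isDiag_iff_proj_eq] using h
    have hu' : u ∈ S ∪ T := he.2 u (by simp)
    have hv' : v ∈ S ∪ T := he.2 v (by simp)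
    have key : ∀ B : Finset V, (∀ w ∈ (s(u,v) : Sym2 V), w ∈ S ∪ B) ↔ ({u,v} \ S : Finset V) ⊆ B := by
      intro B
      constructor
      · intro h x hx
        simp only [mem_sdiff, mem_insert, mem_singleton] at hx
        obtain ⟨hx1, hx2⟩ := hx
        rcases hx1 with rfl | rfl
        · rcases mem_union.mp (h x (by simp)) with h' | h'
          · exact absurd h' hx2
          · exact h'
        · rcases mem_union.mp (h x (by simp)) with h' | h'
          · exact absurd h' hx2
          · exact h'
      · intro h w hw
        rw [Sym2.mem_iff] at hw
        by_cases hwS : w ∈ S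
        · exact mem_union_left _ hwS
        · refine mem_union_right _ (h ?_)
          simp only [mem_sdiff, mem_insert, mem_singleton]
          exact ⟨hw, hwS⟩
    have hsub : ({u,v} \ S : Finset V) ⊆ T := by
      intro x hx
      simp only [mem_sdiff, mem_insert, mem_singleton] at hx
      rcases hx.1 with rfl | rfl
      · exact (mem_union.mp hu').resolve_left hx.2
      · exact (mem_union.mp hv').resolve_left hx.2
    have hsum : (∑ B ∈ powersetCard k T, if (∀ w ∈ (s(u,v):Sym2 V), w ∈ S ∪ B) then (1:ℝ) else 0)
        = (cc T.card k (({u,v} \ S : Finset V).card) : ℝ) := by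
      rw [Finset.sum_boole, filter_congr (fun B _ => key B),
        count_supersets T _ hsub k]
    rw [hsum]
    have hmemS : (s(u,v) ∈ edgesIn G S) ↔ (u ∈ S ∧ v ∈ S) := by
      simp [edgesIn, mem_filter, Sym2.mem_iff, he.1]
    have hmemT : (s(u,v) ∈ edgesIn G T) ↔ (u ∈ T ∧ v ∈ T) := by
      simp [edgesIn, mem_filter, Sym2.mem_iff, he.1]
    by_cases hu : u ∈ S <;> by_cases hv : v ∈ S
    · have hA : ({u,v} \ S : Finset V) = ∅ := by
        rw [sdiff_eq_empty_iff_subset]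
        intro x hx; simp only [mem_insert, mem_singleton] at hx
        rcases hx with rfl | rfl <;> assumption
      have h1 : s(u,v) ∈ edgesIn G S := hmemS.mpr ⟨hu, hv⟩
      have h2 : s(u,v) ∉ edgesIn G T := by
        rw [hmemT]; rintro ⟨h', _⟩; exact disjoint_left.mp hST hu h'
      rw [hA, if_pos h1, if_neg h2]
      simp [cc]
    · have hA : ({u,v} \ S : Finset V) = {v} := by
        ext x; simp only [mem_sdiff, mem_insert, mem_singleton]
        constructor
        · rintro ⟨rfl | rfl, h2⟩; exact absurd hu h2; rfl
        · rintro rfl; exact ⟨Or.inr rfl, hv⟩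
      have h1 : s(u,v) ∉ edgesIn G S := by rw [hmemS]; rintro ⟨_, h'⟩; exact hv h'
      have h2 : s(u,v) ∉ edgesIn G T := by
        rw [hmemT]; rintro ⟨h', _⟩; exact disjoint_left.mp hST hu h'
      rw [hA, if_neg h1, if_neg h2]
      simp
    · have hA : ({u,v} \ S : Finset V) = {u} := by
        ext x; simp only [mem_sdiff, mem_insert, mem_singleton]
        constructor
        · rintro ⟨rfl | rfl, h2⟩; rfl; exact absurd hv h2
        · rintro rfl; exact ⟨Or.inl rfl, hu⟩
      have h1 : s(u,v) ∉ edgesIn G S := by rw [hmemS]; rintro ⟨h', _⟩; exact hu h'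
      have h2 : s(u,v) ∉ edgesIn G T := by
        rw [hmemT]; rintro ⟨_, h'⟩; exact disjoint_left.mp hST hv h'
      rw [hA, if_neg h1, if_neg h2]
      simp
    · have hA : ({u,v} \ S : Finset V) = {u, v} := by
        rw [Finset.sdiff_eq_self_iff_disjoint]
        simp only [disjoint_left, mem_insert, mem_singleton]
        rintro x (rfl | rfl) <;> assumption
      have h1 : s(u,v) ∉ edgesIn G S := by rw [hmemS]; rintro ⟨h', _⟩; exact hu h'
      have h2 : s(u,v) ∈ edgesIn G T :=
        hmemT.mpr ⟨(mem_union.mp hu').resolve_left hu, (mem_union.mp hv').resolve_left hv⟩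
      rw [hA, if_neg h1, if_pos h2, card_pair hne]
      ring

lemma master (S T : Finset V) (hST : Disjoint S T) (k : ℕ) :
    (∑ B ∈ powersetCard k T, ((edgesIn G (S ∪ B)).card : ℝ))
      = (cc T.card k 1 : ℝ) * (edgesIn G (S ∪ T)).card
        + ((cc T.card k 0 : ℝ) - cc T.card k 1) * (edgesIn G S).card
        + ((cc T.card k 2 : ℝ) - cc T.card k 1) * (edgesIn G T).card := by
  have step1 : ∀ B ∈ powersetCard k T, ((edgesIn G (S ∪ B)).card : ℝ)
      = ∑ e ∈ edgesIn G (S ∪ T), (if (∀ v ∈ e, v ∈ S ∪ B) then (1:ℝ) else 0) := by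
    intro B hB
    rw [edgesIn_card_step G S T B (mem_powersetCard.mp hB).1, card_filter]
    push_cast
    rfl
  rw [Finset.sum_congr rfl step1, Finset.sum_comm,
    Finset.sum_congr rfl (edge_inner_sum G S T hST k)]
  rw [Finset.sum_add_distrib, Finset.sum_add_distrib, Finset.sum_const,
    Finset.sum_ite_mem, Finset.sum_ite_mem,
    inter_eq_right.mpr (edgesIn_mono G (subset_union_left : S ⊆ S ∪ T)),
    inter_eq_right.mpr (edgesIn_mono G (subset_union_right : T ⊆ S ∪ T)),
    Finset.sum_const, Finset.sum_const]
  simp only [nsmul_eq_mul]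
  ring

end Count

section Avg

lemma exists_abs_ge_avg {I : Type*} (s : Finset I) (hs : s.Nonempty) (f : I → ℝ) (c : ℝ)
    (h : (s.card : ℝ) * c ≤ |∑ i ∈ s, f i|) : ∃ i ∈ s, c ≤ |f i| := by
  have h2 : |∑ i ∈ s, f i| ≤ ∑ i ∈ s, |f i| := Finset.abs_sum_le_sum_abs _ _
  have h3 : ∑ _i ∈ s, c ≤ ∑ i ∈ s, |f i| := by
    rw [Finset.sum_const, nsmul_eq_mul]
    linarith
  exact Finset.exists_le_of_sum_le hs h3

variable {V : Type} [Fintype V] [DecidableEq V] (G : SimpleGraph V) [DecidableRel G.Adj]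

lemma case_one (q : ℝ) (m : ℕ) (W : Finset V) (h2 : 2 ≤ m) (hm : m ≤ W.card) :
    ∃ U : Finset V, U.card = m ∧
      ((m.choose 2 : ℝ) / (W.card.choose 2 : ℝ))
          * |((edgesIn G W).card : ℝ) - q * (W.card.choose 2 : ℝ)|
        ≤ |((edgesIn G U).card : ℝ) - q * (U.card.choose 2 : ℝ)| := by
  have hw2 : 2 ≤ W.card := le_trans h2 hm
  have haw : (0:ℝ) < (W.card.choose 2 : ℝ) := by exact_mod_cast Nat.choose_pos hw2
  have ham : (0:ℝ) ≤ (m.choose 2 : ℝ) := by positivity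
  have hm1 : 1 ≤ m := by omega
  -- the master identity with S = ∅
  have hmaster := master G ∅ W (disjoint_empty_left W) m
  simp only [empty_union, edgesIn_empty, card_empty, Nat.cast_zero, mul_zero, add_zero] at hmaster
  -- key combinatorial identity
  have hkey : (cc W.card m 2 : ℝ) * (W.card.choose 2 : ℝ)
      = (W.card.choose m : ℝ) * (m.choose 2 : ℝ) := by
    have h := choose_id2 (t := W.card) (k := m) hm1 hm
    have hc : (((W.card * (W.card - 1)) * cc W.card m 2 : ℕ) : ℝ)
        = (((m * (m - 1)) * W.card.choose m : ℕ) : ℝ) := by rw [h]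
    rw [Nat.cast_mul, Nat.cast_mul, Nat.cast_mul, Nat.cast_mul,
      Nat.cast_sub (by omega : 1 ≤ W.card), Nat.cast_sub hm1] at hc
    have hw := choose_two_real W.card
    have hmm := choose_two_real m
    push_cast at hc hw hmm ⊢
    nlinarith [hc, hw, hmm]
  -- sum of F over m-subsets
  have hFsum : (∑ U ∈ powersetCard m W,
        (((edgesIn G U).card : ℝ) - q * (U.card.choose 2 : ℝ)))
      = (W.card.choose m : ℝ) * (((m.choose 2 : ℝ) / (W.card.choose 2 : ℝ))
          * (((edgesIn G W).card : ℝ) - q * (W.card.choose 2 : ℝ))) := by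
    rw [Finset.sum_sub_distrib]
    have hcongr : ∀ U ∈ powersetCard m W, q * ((U.card.choose 2 : ℕ) : ℝ)
        = q * ((m.choose 2 : ℕ) : ℝ) := by
      intro U hU
      rw [(mem_powersetCard.mp hU).2]
    rw [Finset.sum_congr rfl hcongr, Finset.sum_const, card_powersetCard, nsmul_eq_mul, hmaster]
    field_simp
    ring_nf
    nlinarith [hkey]
  have hNpos : (0:ℝ) ≤ (W.card.choose m : ℝ) := by positivity
  have hrpos : (0:ℝ) ≤ (m.choose 2 : ℝ) / (W.card.choose 2 : ℝ) := by positivity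
  have hbound : ((powersetCard m W).card : ℝ)
      * (((m.choose 2 : ℝ) / (W.card.choose 2 : ℝ))
        * |((edgesIn G W).card : ℝ) - q * (W.card.choose 2 : ℝ)|)
      ≤ |∑ U ∈ powersetCard m W,
          (((edgesIn G U).card : ℝ) - q * (U.card.choose 2 : ℝ))| := by
    rw [card_powersetCard, hFsum, abs_mul, abs_mul, abs_of_nonneg hNpos, abs_of_nonneg hrpos]
  obtain ⟨U, hU, hUg⟩ := exists_abs_ge_avg (powersetCard m W)
      (powersetCard_nonempty.mpr hm)
      (fun U => ((edgesIn G U).card : ℝ) - q * (U.card.choose 2 : ℝ))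
      (((m.choose 2 : ℝ) / (W.card.choose 2 : ℝ))
        * |((edgesIn G W).card : ℝ) - q * (W.card.choose 2 : ℝ)|) hbound
  exact ⟨U, (mem_powersetCard.mp hU).2, hUg⟩

end Avg

set_option maxHeartbeats 1000000 in
theorem stmt_18 :
    ∃ n₀ : ℕ, ∀ (V : Type) [Fintype V] [DecidableEq V] (G : SimpleGraph V)
      [DecidableRel G.Adj],
      n₀ ≤ Fintype.card V →
      ∀ q D : ℝ,
        q = (G.edgeFinset.card : ℝ) / ((Fintype.card V).choose 2 : ℝ) →
        (∃ S : Finset V,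
          D ≤ |(interiorEdges G S : ℝ) - q * (S.card.choose 2 : ℝ)|) →
        ∃ S' : Finset V, S'.card = Fintype.card V / 2 ∧
          D / 8 ≤ |(interiorEdges G S' : ℝ) - q * (S'.card.choose 2 : ℝ)| := by
  refine ⟨10, ?_⟩
  intro V _ _ G _ hn q D hq hex
  obtain ⟨S, hS⟩ := hex
  rw [interiorEdges_eq] at hS
  obtain ⟨n, hn_eq⟩ : ∃ x, Fintype.card V = x := ⟨_, rfl⟩
  rw [hn_eq] at hn hq ⊢
  obtain ⟨m, hm_eq⟩ : ∃ x, n / 2 = x := ⟨_, rfl⟩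
  rw [hm_eq]
  have hm2 : 2 ≤ m := by omega
  have hm5 : 5 ≤ m := by omega
  have hmn : m ≤ n := by omega
  have h2m : 2 * m ≤ n := by omega
  have hn2m : n ≤ 2 * m + 1 := by omega
  suffices h : ∃ S' : Finset V, S'.card = m ∧
      D / 8 ≤ |((edgesIn G S').card : ℝ) - q * (S'.card.choose 2 : ℝ)| by
    obtain ⟨S', h1, h2⟩ := h
    exact ⟨S', h1, by rw [interiorEdges_eq]; exact h2⟩
  have hcardV : (univ : Finset V).card = n := by rw [card_univ, hn_eq]
  by_cases hD : D ≤ 0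
  · obtain ⟨S', hS'⟩ := powersetCard_nonempty.mpr (show m ≤ (univ : Finset V).card by omega)
    exact ⟨S', (mem_powersetCard.mp hS').2, le_trans (by linarith) (abs_nonneg _)⟩
  push_neg at hD
  -- 8 * C(m,2) dominates C(n,2)
  have h8 : ((n.choose 2 : ℕ) : ℝ) ≤ 8 * ((m.choose 2 : ℕ) : ℝ) := by
    have e1 := choose_two_real n
    have e2 := choose_two_real m
    have c1 : (n : ℝ) ≤ 2 * m + 1 := by exact_mod_cast hn2m
    have c2 : (5 : ℝ) ≤ (m : ℝ) := by exact_mod_cast hm5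
    have c3 : (0 : ℝ) ≤ (n : ℝ) := by positivity
    nlinarith [e1, e2, c1, c2, c3, mul_nonneg (sub_nonneg.mpr c1) c3]
  -- common subcase: a set of size ≥ m with discrepancy ≥ D
  have bound8 : ∀ W : Finset V, m ≤ W.card →
      D ≤ |((edgesIn G W).card : ℝ) - q * (W.card.choose 2 : ℝ)| →
      ∃ U : Finset V, U.card = m ∧
        D / 8 ≤ |((edgesIn G U).card : ℝ) - q * (U.card.choose 2 : ℝ)| := by
    intro W hmW hDW
    obtain ⟨U, hUcard, hUge⟩ := case_one G q m W hm2 hmW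
    refine ⟨U, hUcard, le_trans ?_ hUge⟩
    have hWn : W.card ≤ n := by
      have := card_le_univ W
      omega
    have hcw : ((W.card.choose 2 : ℕ) : ℝ) ≤ 8 * ((m.choose 2 : ℕ) : ℝ) := by
      refine le_trans ?_ h8
      exact_mod_cast Nat.choose_le_choose 2 hWn
    have hpos : (0:ℝ) < ((W.card.choose 2 : ℕ) : ℝ) := by
      exact_mod_cast Nat.choose_pos (le_trans hm2 hmW)
    have hr : (1:ℝ)/8 ≤ ((m.choose 2 : ℕ) : ℝ) / ((W.card.choose 2 : ℕ) : ℝ) := by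
      rw [div_le_div_iff₀ (by norm_num) hpos]
      linarith
    calc D/8 = (1/8) * D := by ring
    _ ≤ (((m.choose 2 : ℕ) : ℝ) / ((W.card.choose 2 : ℕ) : ℝ))
        * |((edgesIn G W).card : ℝ) - q * (W.card.choose 2 : ℝ)| :=
      mul_le_mul hr hDW (le_of_lt hD) (by positivity)
  rcases le_or_gt m S.card with hcase | hcase
  · exact bound8 S hcase hS
  -- now S.card < m ; consider the complement T
  have hdisj : Disjoint S (Sᶜ) := disjoint_compl_right
  have hST : S ∪ Sᶜ = (univ : Finset V) := union_compl S
  obtain ⟨s, hs_eq⟩ : ∃ x, S.card = x := ⟨_, rfl⟩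
  obtain ⟨t, ht_eq⟩ : ∃ x, (Sᶜ : Finset V).card = x := ⟨_, rfl⟩
  have htval : t = n - s := by
    rw [← ht_eq, ← hs_eq, card_compl, hn_eq]
  rw [hs_eq] at hS hcase
  obtain ⟨k, hk_eq⟩ : ∃ x, m - s = x := ⟨_, rfl⟩
  have h1k : 1 ≤ k := by omega
  have hkt : k ≤ t := by omega
  have ht2 : 2 ≤ t := by omega
  have hmt : m ≤ t := by omega
  have hskm : s + k = m := by omega
  have hstn : s + t = n := by omega
  rcases le_or_gt D |((edgesIn G Sᶜ).card : ℝ) - q * (((Sᶜ : Finset V).card.choose 2 : ℕ) : ℝ)|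
    with hcase2 | hcase2
  · exact bound8 Sᶜ (by omega) hcase2
  rw [ht_eq] at hcase2
  -- main case: average over supersets of S of size m
  have HC1 : (cc t k 1 : ℝ) * t = (cc t k 0 : ℝ) * k := by
    have h := choose_id1 (t := t) (k := k) h1k hkt
    have hcc : cc t k 1 = (t - 1).choose (k - 1) := by simp [cc, h1k]
    have h' : (t - 1).choose (k - 1) * t = t.choose k * k := by
      rw [Nat.mul_comm, h, Nat.mul_comm]
    rw [hcc, cc_zero]
    exact_mod_cast h'
  have HC2 : (cc t k 2 : ℝ) * ((t:ℝ) * t - t) = (cc t k 0 : ℝ) * ((k:ℝ) * k - k) := by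
    have h := choose_id2 (t := t) (k := k) h1k hkt
    have h' := congrArg (Nat.cast : ℕ → ℝ) h
    push_cast [Nat.cast_sub (show 1 ≤ t by omega), Nat.cast_sub h1k] at h'
    rw [cc_zero]
    linear_combination h'
  have hchoosene : ((n.choose 2 : ℕ) : ℝ) ≠ 0 := by
    have : 0 < n.choose 2 := Nat.choose_pos (by omega)
    positivity
  have HQ : ((edgesIn G univ).card : ℝ) = q * ((n.choose 2 : ℕ) : ℝ) := by
    rw [edgesIn_univ, hq]
    field_simp
  rw [show n = s + t from by omega] at HQ
  have H1 : 2 * (((s + t).choose 2 : ℕ) : ℝ) = ((s:ℝ) + t) * ((s:ℝ) + t) - ((s:ℝ) + t) := by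
    have h := choose_two_real (s + t)
    push_cast at h ⊢
    linarith
  have H2 : 2 * (((s + k).choose 2 : ℕ) : ℝ) = ((s:ℝ) + k) * ((s:ℝ) + k) - ((s:ℝ) + k) := by
    have h := choose_two_real (s + k)
    push_cast at h ⊢
    linarith
  have H3 := choose_two_real s
  have H4 := choose_two_real t
  have hmast := master G S Sᶜ hdisj k
  rw [ht_eq, hST] at hmast
  have hFid : (∑ B ∈ powersetCard k Sᶜ,
        (((edgesIn G (S ∪ B)).card : ℝ) - q * (((S ∪ B).card.choose 2 : ℕ) : ℝ)))
      = ((cc t k 0 : ℝ) - cc t k 1)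
            * (((edgesIn G S).card : ℝ) - q * ((s.choose 2 : ℕ) : ℝ))
        + ((cc t k 2 : ℝ) - cc t k 1)
            * (((edgesIn G Sᶜ).card : ℝ) - q * ((t.choose 2 : ℕ) : ℝ)) := by
    have hcongr : ∀ B ∈ powersetCard k Sᶜ,
        (((edgesIn G (S ∪ B)).card : ℝ) - q * (((S ∪ B).card.choose 2 : ℕ) : ℝ))
          = (((edgesIn G (S ∪ B)).card : ℝ) - q * (((s + k).choose 2 : ℕ) : ℝ)) := by
      intro B hB
      have hBT := (mem_powersetCard.mp hB).1
      have : (S ∪ B).card = s + k := by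
        rw [card_union_of_disjoint (hdisj.mono_right hBT), (mem_powersetCard.mp hB).2, hs_eq]
      rw [this]
    rw [Finset.sum_congr rfl hcongr, Finset.sum_sub_distrib, Finset.sum_const,
      card_powersetCard, ht_eq, hmast, nsmul_eq_mul, ← cc_zero (t := t) (k := k)]
    linear_combination (cc t k 1 : ℝ) * HQ + (q * (cc t k 1 : ℝ)/2) * H1
      - (q * (cc t k 0 : ℝ)/2) * H2 + (q * ((cc t k 0 : ℝ) - (cc t k 1 : ℝ))/2) * H3
      + (q * ((cc t k 2 : ℝ) - (cc t k 1 : ℝ))/2) * H4 + (q * (s:ℝ)) * HC1 + (q/2) * HC2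
  -- inequalities between the coefficients
  have hc0pos : (0:ℝ) < (cc t k 0 : ℝ) := by
    rw [cc_zero]
    exact_mod_cast Nat.choose_pos hkt
  have hc01 : (cc t k 1 : ℝ) ≤ (cc t k 0 : ℝ) := by
    exact_mod_cast cc_one_le_cc_zero h1k hkt
  have hc12 : (cc t k 2 : ℝ) ≤ (cc t k 1 : ℝ) := by
    exact_mod_cast cc_two_le_cc_one h1k hkt
  have htkreal : (t:ℝ) - k = ((n - m : ℕ) : ℝ) := by
    rw [show n - m = t - k from by omega, Nat.cast_sub hkt]
  have hineq8 : (t:ℝ) * t - t ≤ 8 * (((t:ℝ) - k) * ((t:ℝ) - k - 1)) := by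
    rw [htkreal]
    have hu5 : (5:ℝ) ≤ ((n - m : ℕ) : ℝ) := by exact_mod_cast (show 5 ≤ n - m by omega)
    have htu : (t:ℝ) ≤ 2 * ((n - m : ℕ) : ℝ) + 1 := by
      exact_mod_cast (show t ≤ 2 * (n - m) + 1 by omega)
    have ht0 : (0:ℝ) ≤ (t:ℝ) := by positivity
    nlinarith [mul_nonneg (sub_nonneg.mpr htu) ht0]
  have hkey8 : (cc t k 0 : ℝ) ≤ 8 * (((cc t k 0 : ℝ) - cc t k 1) - ((cc t k 1 : ℝ) - cc t k 2)) := by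
    have E : ((cc t k 0 : ℝ) - 2 * (cc t k 1) + cc t k 2) * ((t:ℝ) * t - t)
        = (cc t k 0 : ℝ) * (((t:ℝ) - k) * ((t:ℝ) - k - 1)) := by
      linear_combination (-2 * ((t:ℝ) - 1)) * HC1 + HC2
    have htpos : (0:ℝ) < (t:ℝ) * t - t := by
      have h2t : (2:ℝ) ≤ (t:ℝ) := by exact_mod_cast ht2
      nlinarith
    have hmul : (cc t k 0 : ℝ) * ((t:ℝ) * t - t)
        ≤ (8 * (((cc t k 0 : ℝ) - cc t k 1) - ((cc t k 1 : ℝ) - cc t k 2))) * ((t:ℝ) * t - t) := by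
      calc (cc t k 0 : ℝ) * ((t:ℝ)*t - t)
          ≤ (cc t k 0 : ℝ) * (8 * (((t:ℝ)-k)*((t:ℝ)-k-1))) :=
            mul_le_mul_of_nonneg_left hineq8 hc0pos.le
      _ = 8 * ((cc t k 0 : ℝ) * (((t:ℝ)-k)*((t:ℝ)-k-1))) := by ring
      _ = 8 * (((cc t k 0:ℝ) - 2*(cc t k 1) + cc t k 2) * ((t:ℝ)*t - t)) := by rw [E]
      _ = (8 * (((cc t k 0 : ℝ) - cc t k 1) - ((cc t k 1 : ℝ) - cc t k 2))) * ((t:ℝ) * t - t) := by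
          ring
    exact le_of_mul_le_mul_right hmul htpos
  -- lower bound for the averaged sum
  have hsum_lb : ((powersetCard k (Sᶜ : Finset V)).card : ℝ) * (D/8)
      ≤ |∑ B ∈ powersetCard k Sᶜ,
          (((edgesIn G (S ∪ B)).card : ℝ) - q * (((S ∪ B).card.choose 2 : ℕ) : ℝ))| := by
    rw [card_powersetCard, ht_eq, hFid, ← cc_zero (t := t) (k := k)]
    set FS := ((edgesIn G S).card : ℝ) - q * ((s.choose 2 : ℕ) : ℝ) with hFS
    set FT := ((edgesIn G Sᶜ).card : ℝ) - q * ((t.choose 2 : ℕ) : ℝ) with hFT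
    have habs : ((cc t k 0 : ℝ) - cc t k 1) * |FS| - ((cc t k 1 : ℝ) - cc t k 2) * |FT|
        ≤ |((cc t k 0 : ℝ) - cc t k 1) * FS + ((cc t k 2 : ℝ) - cc t k 1) * FT| := by
      have h1 : |((cc t k 0 : ℝ) - cc t k 1) * FS|
          ≤ |((cc t k 0 : ℝ) - cc t k 1) * FS + ((cc t k 2 : ℝ) - cc t k 1) * FT|
            + |((cc t k 2 : ℝ) - cc t k 1) * FT| := by
        have := abs_add_le (((cc t k 0 : ℝ) - cc t k 1) * FS + ((cc t k 2 : ℝ) - cc t k 1) * FT)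
          (-(((cc t k 2 : ℝ) - cc t k 1) * FT))
        rw [abs_neg] at this
        calc |((cc t k 0 : ℝ) - cc t k 1) * FS|
            = |(((cc t k 0 : ℝ) - cc t k 1) * FS + ((cc t k 2 : ℝ) - cc t k 1) * FT)
              + (-(((cc t k 2 : ℝ) - cc t k 1) * FT))| := by ring_nf
        _ ≤ _ := this
      rw [abs_mul, abs_mul, abs_of_nonneg (by linarith : (0:ℝ) ≤ (cc t k 0 : ℝ) - cc t k 1),
        abs_of_nonpos (by linarith : ((cc t k 2 : ℝ) - cc t k 1) ≤ 0)] at h1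
      linarith
    have hFSlb : ((cc t k 0 : ℝ) - cc t k 1) * D ≤ ((cc t k 0 : ℝ) - cc t k 1) * |FS| :=
      mul_le_mul_of_nonneg_left hS (by linarith)
    have hFTub : ((cc t k 1 : ℝ) - cc t k 2) * |FT| ≤ ((cc t k 1 : ℝ) - cc t k 2) * D :=
      mul_le_mul_of_nonneg_left (le_of_lt hcase2) (by linarith)
    have In0 : ((cc t k 0 : ℝ)/8) * D
        ≤ (((cc t k 0 : ℝ) - cc t k 1) - ((cc t k 1 : ℝ) - cc t k 2)) * D :=
      mul_le_mul_of_nonneg_right (by linarith) hD.le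
    linarith [habs, hFSlb, hFTub, In0]
  obtain ⟨B, hB, hBg⟩ := exists_abs_ge_avg (powersetCard k Sᶜ)
      (powersetCard_nonempty.mpr (by omega))
      (fun B => ((edgesIn G (S ∪ B)).card : ℝ) - q * (((S ∪ B).card.choose 2 : ℕ) : ℝ))
      (D/8) hsum_lb
  refine ⟨S ∪ B, ?_, hBg⟩
  have hBT := (mem_powersetCard.mp hB).1
  rw [card_union_of_disjoint (hdisj.mono_right hBT), (mem_powersetCard.mp hB).2, hs_eq]
  omega
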